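/- Let p be a prime, n ≥ 1, and R a commutative ring such that for every maximal ideal 𝔭 of R the residue field R/𝔭 has characteristic p. Then the assignment 𝔭 ↦ ker(W_n(R) → R → R/𝔭), where the first map is the zeroth-component ring homomorphism and the second is the quotient map, is a bijection between the maximal ideals of R and the maximal ideals of W_n(R). In particular, every maximal ideal of W_n(R) is of this form for a unique maximal ideal 𝔭 of R. -/

import Mathlib

set_option maxHeartbeats 1000000

/-!
Statement 1: Let `p` be a prime, `n ≥ 1`, and `R` a commutative ring all of whose residue
fields at maximal ideals have characteristic `p`. Then `𝔭 ↦ ker (W_n(R) → R → R/𝔭)`,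
where the first map is the zeroth-component ring homomorphism, is a bijection between
the maximal ideals of `R` and the maximal ideals of `W_n(R)`.
-/

namespace TruncatedWittVector

variable {p : ℕ} [Fact p.Prime] {n : ℕ} {R : Type*} [CommRing R]

/-- The zeroth component `(a₀, …, a_{n-1}) ↦ a₀` of a truncated Witt vector of positive
length, as a ring homomorphism. -/
noncomputable def zeroth (hn : 1 ≤ n) :
    TruncatedWittVector p n R →+* R :=
  RingHom.liftOfRightInverse (WittVector.truncate n) out truncateFun_out
    ⟨WittVector.constantCoeff, by
      intro x hx
      rw [WittVector.mem_ker_truncate] at hx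
      rw [RingHom.mem_ker, WittVector.constantCoeff_apply, hx 0 hn]⟩

/-- `zeroth` is indeed the zeroth-component map `(a₀, …, a_{n-1}) ↦ a₀`. -/
theorem zeroth_coeff (hn : 1 ≤ n) (x : TruncatedWittVector p n R) :
    zeroth hn x = x.coeff ⟨0, hn⟩ := by
  obtain ⟨y, rfl⟩ := WittVector.truncate_surjective p n R x
  have h1 : zeroth (p := p) hn (WittVector.truncate n y) = WittVector.constantCoeff y :=
    RingHom.liftOfRightInverse_comp_apply _ _ _ _ y
  rw [h1, WittVector.coeff_truncate, WittVector.constantCoeff_apply]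

end TruncatedWittVector

section Aux

variable {p : ℕ} [hp : Fact p.Prime] {R : Type*} [CommRing R]

open WittVector Function

local notation "𝕎" => WittVector p

namespace WittAux

theorem iterate_verschiebung_coeff_lt (x : 𝕎 R) : ∀ (m i : ℕ), i < m →
    (verschiebung^[m] x).coeff i = 0 := by
  intro m
  induction m with
  | zero => omega
  | succ m ih =>
    intro i hi
    rw [Function.iterate_succ_apply']
    match i with
    | 0 => exact verschiebung_coeff_zero _
    | (j+1) => rw [verschiebung_coeff_succ]; exact ih j (by omega)

theorem iterate_frobenius_verschiebung (m : ℕ) (x : 𝕎 R) :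
    frobenius^[m] (verschiebung^[m] x) = x * (p : 𝕎 R) ^ m := by
  induction m generalizing x with
  | zero => simp
  | succ m ih =>
    rw [Function.iterate_succ_apply' (f := ⇑(WittVector.frobenius (p := p) (R := R))),
      Function.iterate_succ_apply (f := ⇑(verschiebung (R := R))), ih (verschiebung x),
      map_mul, map_pow, map_natCast, frobenius_verschiebung, pow_succ]
    ring

theorem iterate_verschiebung_mul' (m : ℕ) (x y : 𝕎 R) :
    verschiebung^[m] x * verschiebung^[m] y
      = verschiebung^[m] (x * (y * (p : 𝕎 R) ^ m)) := by
  rw [iterate_verschiebung_mul_left, iterate_frobenius_verschiebung]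

/-- Key lemma: if `p` times anything is "1-unitizable" in `R`, then a truncated Witt
vector whose zeroth coefficient is a unit is itself a unit. -/
theorem keyUnit (hU : ∀ c : R, IsUnit (1 + (p : R) * c)) :
    ∀ (m : ℕ) (hm : 1 ≤ m) (x : TruncatedWittVector p m R),
      IsUnit (x.coeff ⟨0, hm⟩) → IsUnit x := by
  intro m
  induction m with
  | zero => omega
  | succ n ih =>
    intro hm x hx
    rcases Nat.eq_zero_or_pos n with rfl | hn
    · -- width 1 : the ring is isomorphic to R via `zeroth`
      obtain ⟨w, hw⟩ := hx.exists_right_inv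
      refine IsUnit.of_mul_eq_one (a := x) (TruncatedWittVector.mk p fun _ => w) ?_
      have hinj : Function.Injective
          (TruncatedWittVector.zeroth (p := p) (R := R) (n := 1) le_rfl) := by
        intro a b hab
        ext i
        have hi : i = ⟨0, by omega⟩ := Subsingleton.elim _ _
        subst hi
        rwa [TruncatedWittVector.zeroth_coeff, TruncatedWittVector.zeroth_coeff] at hab
      apply hinj
      rw [map_mul, map_one, TruncatedWittVector.zeroth_coeff,
        TruncatedWittVector.zeroth_coeff, TruncatedWittVector.coeff_mk]
      exact hw
    · -- inductive step
      have hle : n ≤ n + 1 := Nat.le_succ n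
      have hx' : IsUnit ((TruncatedWittVector.truncate hle x).coeff ⟨0, hn⟩) := by
        rw [TruncatedWittVector.coeff_truncate]
        exact hx
      obtain ⟨v, hv⟩ := (ih hn _ hx').exists_right_inv
      obtain ⟨u, hu⟩ := TruncatedWittVector.truncate_surjective (p := p) (R := R) hle v
      set k := x * u - 1 with hk
      have hktr : ∀ i : Fin (n+1), (i : ℕ) < n → k.coeff i = 0 := by
        intro i hi
        have h0 : TruncatedWittVector.truncate hle k = 0 := by
          rw [hk, map_sub, map_mul, map_one, hu, hv, sub_self]
        have h1 : k.coeff (Fin.castLE hle ⟨(i : ℕ), hi⟩) = 0 := by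
          rw [← TruncatedWittVector.coeff_truncate, h0, TruncatedWittVector.coeff_zero]
        have h2 : Fin.castLE hle ⟨(i : ℕ), hi⟩ = i := by
          apply Fin.ext; rfl
        rwa [h2] at h1
      set a := k.coeff ⟨n, Nat.lt_succ_self n⟩ with ha
      have hun : IsUnit (1 + a * (p : R) ^ n) := by
        have h3 := hU (a * (p : R) ^ (n - 1))
        have hpn : (p : R) ^ n = (p : R) * (p : R) ^ (n - 1) := by
          rw [← pow_succ']
          congr 1
          omega
        rwa [show (1 : R) + (p : R) * (a * (p : R) ^ (n-1)) = 1 + a * (p : R) ^ n by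
          rw [hpn]; ring] at h3
      obtain ⟨b, hb⟩ : ∃ b : R, a + b + a * (b * (p : R) ^ n) = 0 := by
        obtain ⟨v', hv'⟩ := hun.exists_right_inv
        exact ⟨-(a * v'), by linear_combination (-a) * hv'⟩
      set ra : 𝕎 R := WittVector.mk p (fun j => if j = 0 then a else 0) with hra
      set rb : 𝕎 R := WittVector.mk p (fun j => if j = 0 then b else 0) with hrb
      set k' : TruncatedWittVector p (n+1) R :=
        WittVector.truncate (n+1) (verschiebung^[n] rb) with hk'
      have hcra : (ra).coeff 0 = a := by rw [hra, WittVector.coeff_mk]; simp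
      have hcrb : (rb).coeff 0 = b := by rw [hrb, WittVector.coeff_mk]; simp
      have hkK : k = WittVector.truncate (n+1) (verschiebung^[n] ra) := by
        ext i
        rw [WittVector.coeff_truncate]
        rcases lt_or_ge (i : ℕ) n with hi | hi
        · rw [iterate_verschiebung_coeff_lt ra n i hi, hktr i hi]
        · have hi' : (i : ℕ) = n := by omega
          have h2 : (verschiebung^[n] ra).coeff ((i : ℕ)) = a := by
            rw [hi']
            have h4 := WittVector.iterate_verschiebung_coeff ra n 0
            rw [zero_add] at h4
            rw [h4, hcra]
          rw [h2, ha]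
          congr 1
          exact Fin.ext hi'
      have hsum : k + k' + k * k' = 0 := by
        have hV : verschiebung^[n] ra + verschiebung^[n] rb
            + verschiebung^[n] ra * verschiebung^[n] rb
            = verschiebung^[n] (ra + rb + ra * (rb * (p : 𝕎 R) ^ n)) := by
          rw [iterate_verschiebung_mul', iterate_map_add, iterate_map_add]
        rw [hkK, hk', ← map_mul, ← map_add, ← map_add, hV]
        set s : 𝕎 R := ra + rb + ra * (rb * (p : 𝕎 R) ^ n) with hs
        have hs0 : s.coeff 0 = 0 := by
          have h5 : WittVector.constantCoeff s = 0 := by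
            rw [hs, map_add, map_add, map_mul, map_mul, map_pow, map_natCast]
            show ra.coeff 0 + rb.coeff 0 + ra.coeff 0 * (rb.coeff 0 * (p:R) ^ n) = 0
            rw [hcra, hcrb]
            exact hb
          rwa [WittVector.constantCoeff_apply] at h5
        ext i
        rw [WittVector.coeff_truncate, TruncatedWittVector.coeff_zero]
        rcases lt_or_ge (i : ℕ) n with hi | hi
        · exact iterate_verschiebung_coeff_lt _ n i hi
        · have hi' : (i : ℕ) = n := by omega
          have h4 := WittVector.iterate_verschiebung_coeff s n 0
          rw [zero_add] at h4
          rw [hi', h4, hs0]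
      have hone : (1 + k) * (1 + k') = 1 := by linear_combination hsum
      have hxu : IsUnit (x * u) := by
        have h6 : x * u = 1 + k := by rw [hk]; ring
        rw [h6]
        exact IsUnit.of_mul_eq_one _ hone
      exact isUnit_of_mul_isUnit_left hxu

end WittAux

end Aux

theorem stmt_1 (p : ℕ) [Fact p.Prime] (n : ℕ) (hn : 1 ≤ n) (R : Type*) [CommRing R]
    (hchar : ∀ 𝔭 : Ideal R, 𝔭.IsMaximal → CharP (R ⧸ 𝔭) p) :
    (∀ 𝔭 : Ideal R, 𝔭.IsMaximal →
      (RingHom.ker ((Ideal.Quotient.mk 𝔭).comp (TruncatedWittVector.zeroth (p := p) hn))).IsMaximal) ∧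
    (∀ 𝔐 : Ideal (TruncatedWittVector p n R), 𝔐.IsMaximal →
      ∃! 𝔭 : Ideal R, 𝔭.IsMaximal ∧
        𝔐 = RingHom.ker ((Ideal.Quotient.mk 𝔭).comp (TruncatedWittVector.zeroth (p := p) hn))) := by
  have hU : ∀ c : R, IsUnit (1 + (p : R) * c) := by
    intro c
    by_contra hnu
    obtain ⟨𝔭, h𝔭, hmem⟩ := exists_max_ideal_of_mem_nonunits hnu
    have hp𝔭 : (p : R) ∈ 𝔭 := by
      haveI := hchar 𝔭 h𝔭
      have h0 : ((p : ℕ) : R ⧸ 𝔭) = 0 := CharP.cast_eq_zero _ p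
      rw [← map_natCast (Ideal.Quotient.mk 𝔭), Ideal.Quotient.eq_zero_iff_mem] at h0
      exact h0
    have h1 : (1 : R) ∈ 𝔭 := by
      have := 𝔭.sub_mem hmem (𝔭.mul_mem_right c hp𝔭)
      simpa using this
    exact h𝔭.ne_top ((Ideal.eq_top_iff_one 𝔭).mpr h1)
  set f := TruncatedWittVector.zeroth (p := p) (R := R) hn with hf
  have hfs : Function.Surjective f := by
    intro c
    exact ⟨TruncatedWittVector.mk p (fun _ => c), by
      rw [hf, TruncatedWittVector.zeroth_coeff, TruncatedWittVector.coeff_mk]⟩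
  have key : ∀ x : TruncatedWittVector p n R, IsUnit (f x) → IsUnit x := by
    intro x h
    refine WittAux.keyUnit hU n hn x ?_
    rwa [hf, TruncatedWittVector.zeroth_coeff] at h
  have hkereq : ∀ 𝔮 : Ideal R,
      RingHom.ker ((Ideal.Quotient.mk 𝔮).comp f) = Ideal.comap f 𝔮 := by
    intro 𝔮
    rw [← RingHom.comap_ker, Ideal.mk_ker]
  constructor
  · intro 𝔭 h𝔭
    haveI := h𝔭
    rw [hkereq]
    exact Ideal.comap_isMaximal_of_surjective f hfs
  · intro 𝔐 h𝔐
    have hker𝔐 : RingHom.ker f ≤ 𝔐 := by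
      intro z hz
      by_contra hz𝔐
      obtain ⟨y, i, hi𝔐, hyi⟩ := h𝔐.exists_inv hz𝔐
      have h1 : f i = 1 := by
        have h2 := congrArg f hyi
        rwa [map_add, map_mul, RingHom.mem_ker.mp hz, mul_zero, zero_add, map_one] at h2
      have h3 : IsUnit i := key i (by rw [h1]; exact isUnit_one)
      exact h𝔐.ne_top (𝔐.eq_top_of_isUnit_mem hi𝔐 h3)
    have hcm : Ideal.comap f (Ideal.map f 𝔐) = 𝔐 := by
      rw [Ideal.comap_map_of_surjective f hfs 𝔐]
      exact sup_eq_left.mpr hker𝔐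
    refine ⟨Ideal.map f 𝔐, ⟨?_, ?_⟩, ?_⟩
    · rcases Ideal.map_eq_top_or_isMaximal_of_surjective f hfs h𝔐 with htop | hmax
      · exfalso
        apply h𝔐.ne_top
        rw [← hcm, htop, Ideal.comap_top]
      · exact hmax
    · rw [hkereq, hcm]
    · rintro 𝔮 ⟨h𝔮max, h𝔮eq⟩
      have h4 : 𝔐 = Ideal.comap f 𝔮 := by rw [h𝔮eq, hkereq]
      rw [h4, Ideal.map_comap_of_surjective f hfs 𝔮]
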